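/- The function (1/(4π)) ∫₀^{2π} log|1 - z₁² - z₂² - 2z₁z₂ cos θ| dθ (with value -∞ allowed) equals -∞ exactly at the four points (z₁,z₂) ∈ {(1,0),(-1,0),(0,1),(0,-1)} of ℂ². -/

import Mathlib

open Real MeasureTheory ENNReal

namespace FKaux

/-- `log |x|` is interval integrable. -/
lemma II_log_abs (a b : ℝ) : IntervalIntegrable (fun x => Real.log |x|) volume a b := by
  set M : ℝ := max (max |a| |b|) 1 with hMdef
  have hM1 : (1:ℝ) ≤ M := le_max_right _ _
  have hM0 : (0:ℝ) < M := lt_of_lt_of_le one_pos hM1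
  have hmain : IntegrableOn (fun x => Real.log |x|) (Set.Icc (-M) M) volume := by
    have h1a : IntegrableOn (fun x : ℝ => x ^ (-(2⁻¹) : ℝ)) (Set.Icc 0 M) volume :=
      (intervalIntegrable_iff_integrableOn_Icc_of_le hM0.le).mp
        (intervalIntegral.intervalIntegrable_rpow' (by norm_num : (-1:ℝ) < -(2⁻¹)))
    have h1 : IntegrableOn (fun x : ℝ => |x| ^ (-(2⁻¹) : ℝ)) (Set.Icc 0 M) volume :=
      h1a.congr_fun (fun x hx => by rw [abs_of_nonneg hx.1]) measurableSet_Icc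
    have h2 : IntegrableOn (fun x : ℝ => |x| ^ (-(2⁻¹) : ℝ)) (Set.Icc (-M) 0) volume := by
      have h0 : IntervalIntegrable (fun x : ℝ => x ^ (-(2⁻¹) : ℝ)) volume 0 M :=
        intervalIntegral.intervalIntegrable_rpow' (by norm_num : (-1:ℝ) < -(2⁻¹))
      have h0' := (IntervalIntegrable.iff_comp_neg (f := fun x : ℝ => x ^ (-(2⁻¹) : ℝ))).mp h0
      rw [neg_zero] at h0'
      have h2a : IntegrableOn (fun x : ℝ => (-x) ^ (-(2⁻¹) : ℝ)) (Set.Icc (-M) 0) volume :=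
        (intervalIntegrable_iff_integrableOn_Icc_of_le
          (by linarith : -M ≤ (0:ℝ))).mp h0'.symm
      exact h2a.congr_fun (fun x hx => by rw [abs_of_nonpos hx.2]) measurableSet_Icc
    have hrpow : IntegrableOn (fun x : ℝ => |x| ^ (-(2⁻¹) : ℝ)) (Set.Icc (-M) M) volume := by
      refine (h2.union h1).mono_set ?_
      intro x hx
      rcases le_total x 0 with h | h
      · exact Or.inl ⟨hx.1, h⟩
      · exact Or.inr ⟨h, hx.2⟩
    have hg : IntegrableOn (fun x : ℝ => 2 * |x| ^ (-(2⁻¹) : ℝ) + Real.log M)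
        (Set.Icc (-M) M) volume :=
      (hrpow.const_mul 2).add (integrableOn_const measure_Icc_lt_top.ne)
    refine hg.mono' ((Real.measurable_log.comp measurable_abs).aestronglyMeasurable) ?_
    filter_upwards [ae_restrict_mem measurableSet_Icc] with x hx
    have hxM : |x| ≤ M := abs_le.mpr ⟨hx.1, hx.2⟩
    have hlogM : 0 ≤ Real.log M := Real.log_nonneg hM1
    rcases eq_or_ne x 0 with rfl | hx0
    · simp [Real.log_zero, Real.zero_rpow (by norm_num : (-(2⁻¹):ℝ) ≠ 0), hlogM]
    · have hy : 0 < |x| := abs_pos.mpr hx0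
      rw [Real.norm_eq_abs]
      rcases le_total |x| 1 with hle | hle
      · have h1 : abs (Real.log |x|) = -Real.log |x| :=
          abs_of_nonpos (Real.log_nonpos (abs_nonneg _) hle)
        have h2 : -(Real.log |x|) = 2 * Real.log (|x| ^ (-(2⁻¹) : ℝ)) := by
          rw [Real.log_rpow hy]; ring
        have h3 : Real.log (|x| ^ (-(2⁻¹) : ℝ)) ≤ |x| ^ (-(2⁻¹) : ℝ) := by
          have := Real.log_le_sub_one_of_pos (Real.rpow_pos_of_pos hy (-(2⁻¹)))
          linarith
        rw [h1, h2]
        linarith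
      · have h1 : abs (Real.log |x|) = Real.log |x| :=
          abs_of_nonneg (Real.log_nonneg hle)
        have h2 : Real.log |x| ≤ Real.log M := Real.log_le_log (by linarith) hxM
        have h3 : 0 ≤ 2 * |x| ^ (-(2⁻¹) : ℝ) := by positivity
        rw [h1]; linarith
  rw [intervalIntegrable_iff]
  refine hmain.mono_set ?_
  intro x hx
  have h1 : min a b ≤ x := le_of_lt hx.1
  have h2 : x ≤ max a b := hx.2
  have ha : -M ≤ min a b := le_min (by
      have : |a| ≤ M := le_trans (le_max_left _ _) (le_max_left _ _)
      linarith [neg_abs_le a]) (by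
      have : |b| ≤ M := le_trans (le_max_right _ _) (le_max_left _ _)
      linarith [neg_abs_le b])
  have hb : max a b ≤ M := max_le
    (le_trans (le_abs_self a) (le_trans (le_max_left _ _) (le_max_left _ _)))
    (le_trans (le_abs_self b) (le_trans (le_max_right _ _) (le_max_left _ _)))
  exact ⟨by linarith, by linarith⟩

/-- `log |sin x|` is integrable on each interval `[kπ - π/2, kπ + π/2]`. -/
lemma II_log_abs_sin_local (k : ℤ) :
    IntervalIntegrable (fun x => Real.log |Real.sin x|) volume
      (k * π - π / 2) (k * π + π / 2) := by
  have hlo : k * π - π / 2 ≤ k * π + π / 2 := by linarith [pi_pos]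
  rw [intervalIntegrable_iff_integrableOn_Icc_of_le hlo]
  have hg0 : IntervalIntegrable (fun x => abs (Real.log |x - k * π|)) volume
      (k * π - π / 2) (k * π + π / 2) := by
    have := ((II_log_abs (-(π/2)) (π/2)).abs).comp_sub_right (k * π)
    have e1 : -(π/2) + k * π = k * π - π / 2 := by ring
    have e2 : π/2 + k * π = k * π + π / 2 := by ring
    rwa [e1, e2] at this
  have hg : IntegrableOn (fun x => Real.log (π/2) + abs (Real.log |x - k * π|))
      (Set.Icc (k * π - π / 2) (k * π + π / 2)) volume :=
    (integrableOn_const measure_Icc_lt_top.ne).add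
      ((intervalIntegrable_iff_integrableOn_Icc_of_le hlo).mp hg0)
  refine hg.mono' ((Real.measurable_log.comp
    (Real.measurable_sin.abs)).aestronglyMeasurable) ?_
  filter_upwards [ae_restrict_mem measurableSet_Icc] with x hx
  have hπ2 : (1:ℝ) ≤ π / 2 := by linarith [pi_gt_three]
  have hlogπ : 0 ≤ Real.log (π/2) := Real.log_nonneg hπ2
  set u : ℝ := x - k * π with hu
  have hub : |u| ≤ π / 2 := abs_le.mpr ⟨by simp only [hu]; linarith [hx.1], by
    simp only [hu]; linarith [hx.2]⟩
  have hsin : |Real.sin x| = |Real.sin u| := by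
    have : x = u + (k : ℝ) * π := by simp [hu]
    have habs1 : |(-1 : ℝ) ^ k| = 1 := by
      rcases Int.even_or_odd k with hk | hk
      · rw [hk.neg_one_zpow, abs_one]
      · rw [hk.neg_one_zpow, abs_neg, abs_one]
    rw [this, Real.sin_add_int_mul_pi, abs_mul, habs1, one_mul]
  rw [Real.norm_eq_abs, hsin]
  rcases eq_or_ne (Real.sin u) 0 with hsu | hsu
  · rw [hsu]; simp [hlogπ]
    positivity
  · have hu0 : u ≠ 0 := by
      intro h; apply hsu; rw [h, Real.sin_zero]
    have hupos : 0 < |u| := abs_pos.mpr hu0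
    have hlow : 2 / π * |u| ≤ |Real.sin u| := by
      rcases le_total 0 u with h | h
      · have h1 : 2 / π * u ≤ Real.sin u := Real.mul_le_sin h (by rwa [abs_of_nonneg h] at hub)
        have h2 : 0 ≤ Real.sin u := le_trans (by positivity) h1
        rw [abs_of_nonneg h, abs_of_nonneg h2]; exact h1
      · have h0 : 0 ≤ -u := by linarith
        have h1 : 2 / π * (-u) ≤ Real.sin (-u) :=
          Real.mul_le_sin h0 (by rwa [abs_of_nonpos h] at hub)
        have h2 : 0 ≤ Real.sin (-u) := le_trans (by positivity) h1
        rw [abs_of_nonpos h, ← abs_neg, ← Real.sin_neg, abs_of_nonneg h2]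
        exact h1
    have hlowpos : 0 < 2 / π * |u| := by positivity
    have hsle : |Real.sin u| ≤ 1 := abs_le.mpr ⟨Real.neg_one_le_sin u, Real.sin_le_one u⟩
    have h1 : abs (Real.log |Real.sin u|) = -(Real.log |Real.sin u|) :=
      abs_of_nonpos (Real.log_nonpos (abs_nonneg _) hsle)
    have h2 : Real.log (2 / π * |u|) ≤ Real.log |Real.sin u| :=
      Real.log_le_log hlowpos hlow
    have h3 : Real.log (2 / π * |u|) = -(Real.log (π/2)) + Real.log |u| := by
      rw [Real.log_mul (by positivity) (ne_of_gt hupos)]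
      congr 1
      rw [show (2 / π : ℝ) = (π / 2)⁻¹ by rw [inv_div], Real.log_inv]
    have h4 : -(Real.log |u|) ≤ abs (Real.log |u|) := neg_le_abs _
    rw [h1]
    have : -(Real.log |Real.sin u|) ≤ Real.log (π/2) - Real.log |u| := by
      have := neg_le_neg h2
      rw [h3] at this
      linarith
    linarith

/-- `log |sin x|` is interval integrable on any interval. -/
lemma II_log_abs_sin (a b : ℝ) :
    IntervalIntegrable (fun x => Real.log |Real.sin x|) volume a b := by
  have P : ∀ n : ℕ, IntervalIntegrable (fun x => Real.log |Real.sin x|) volume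
      (-(n * π) - π / 2) (n * π + π / 2) := by
    intro n
    induction n with
    | zero =>
      have := II_log_abs_sin_local 0
      simpa using this
    | succ n ih =>
      have hL := II_log_abs_sin_local (-(n+1) : ℤ)
      have hR := II_log_abs_sin_local ((n+1) : ℤ)
      have eL1 : ((-(n+1) : ℤ) : ℝ) * π - π/2 = -(((n:ℝ)+1) * π) - π/2 := by push_cast; ring
      have eL2 : ((-(n+1) : ℤ) : ℝ) * π + π/2 = -((n:ℝ) * π) - π/2 := by push_cast; ring
      have eR1 : (((n+1) : ℤ) : ℝ) * π - π/2 = (n:ℝ) * π + π/2 := by push_cast; ring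
      have eR2 : (((n+1) : ℤ) : ℝ) * π + π/2 = ((n:ℝ)+1) * π + π/2 := by push_cast; ring
      rw [eL1, eL2] at hL
      rw [eR1, eR2] at hR
      have := (hL.trans ih).trans hR
      have e1 : -(((n:ℕ)+1 : ℕ) * π : ℝ) - π/2 = -(((n:ℝ)+1) * π) - π/2 := by push_cast; ring
      have e2 : (((n:ℕ)+1 : ℕ) : ℝ) * π + π/2 = ((n:ℝ)+1) * π + π/2 := by push_cast; ring
      rw [e1, e2]
      exact this
  obtain ⟨n, hn⟩ := exists_nat_ge (max |a| |b|)
  have hπ1 : (1:ℝ) ≤ π := by linarith [pi_gt_three]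
  have hnπ : (n:ℝ) ≤ n * π := le_mul_of_one_le_right (Nat.cast_nonneg n) hπ1
  refine (P n).mono_set ?_
  have hlo : -((n:ℝ) * π) - π/2 ≤ (n:ℝ) * π + π/2 := by
    have : (0:ℝ) ≤ (n:ℝ) * π := by positivity
    linarith [pi_pos]
  rw [Set.uIcc_of_le hlo]
  intro x hx
  rw [Set.uIcc] at hx
  have hxl : min a b ≤ x := hx.1
  have hxr : x ≤ max a b := hx.2
  have hmaxabs : max a b ≤ max |a| |b| := max_le ((le_abs_self a).trans (le_max_left _ _))
    ((le_abs_self b).trans (le_max_right _ _))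
  have hminabs : -(max |a| |b|) ≤ min a b := le_min
    (by linarith [neg_abs_le a, le_max_left |a| |b|])
    (by linarith [neg_abs_le b, le_max_right |a| |b|])
  exact ⟨by linarith [pi_pos], by linarith [pi_pos]⟩

/-- affine composition -/
lemma II_sin_affine (c d : ℝ) (hc : c ≠ 0) (p q : ℝ) :
    IntervalIntegrable (fun θ => Real.log |Real.sin (θ * c + d)|) volume p q := by
  have h1 := II_log_abs_sin (p * c + d) (q * c + d)
  have h2 := h1.comp_add_right d
  rw [add_sub_cancel_right, add_sub_cancel_right] at h2
  have h3 := h2.comp_mul_right (c := c)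
  rwa [mul_div_cancel_right₀ _ hc, mul_div_cancel_right₀ _ hc] at h3

lemma Gint (d : ℝ) :
    IntegrableOn (fun θ => abs (Real.log |Real.sin (θ * (2:ℝ)⁻¹ + d)|))
      (Set.Icc (0:ℝ) (2 * π)) volume :=
  (intervalIntegrable_iff_integrableOn_Icc_of_le (by positivity)).mp
    ((II_sin_affine 2⁻¹ d (by norm_num) 0 (2 * π)).abs)

/-- The main finiteness lemma. -/
lemma lint_ne_top {A B : ℂ} (h : A ≠ 0 ∨ B ≠ 0) :
    (∫⁻ θ in Set.Icc (0 : ℝ) (2 * π),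
        (if ‖A - B * (Real.cos θ : ℂ)‖ = 0 then ⊤
          else ENNReal.ofReal
            (-(Real.log (‖A - B * (Real.cos θ : ℂ)‖))))) ≠ ⊤ := by
  have key : ∀ g : ℝ → ℝ, IntegrableOn g (Set.Icc (0:ℝ) (2 * π)) volume →
      (∀ᵐ θ ∂(volume.restrict (Set.Icc (0:ℝ) (2 * π))),
        ‖A - B * (Real.cos θ : ℂ)‖ ≠ 0 ∧
        -(Real.log (‖A - B * (Real.cos θ : ℂ)‖)) ≤ g θ) →
      (∫⁻ θ in Set.Icc (0 : ℝ) (2 * π),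
        (if ‖A - B * (Real.cos θ : ℂ)‖ = 0 then ⊤
          else ENNReal.ofReal
            (-(Real.log (‖A - B * (Real.cos θ : ℂ)‖))))) ≠ ⊤ := by
    intro g hg hae
    have hle : (∫⁻ θ in Set.Icc (0 : ℝ) (2 * π),
        (if ‖A - B * (Real.cos θ : ℂ)‖ = 0 then ⊤
          else ENNReal.ofReal
            (-(Real.log (‖A - B * (Real.cos θ : ℂ)‖))))) ≤
        ∫⁻ θ in Set.Icc (0 : ℝ) (2 * π), ‖g θ‖ₑ := by
      refine lintegral_mono_ae (hae.mono fun θ hθ => ?_)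
      rw [if_neg hθ.1]
      exact le_trans (ENNReal.ofReal_le_ofReal hθ.2) (Real.ofReal_le_enorm _)
    exact ne_top_of_le_ne_top hg.hasFiniteIntegral.ne hle
  by_cases hB : B = 0
  · have hA : A ≠ 0 := h.resolve_right (not_not_intro hB)
    refine key (fun _ => -(Real.log (‖A‖))) (integrableOn_const measure_Icc_lt_top.ne) ?_
    refine Filter.Eventually.of_forall fun θ => ?_
    rw [hB, zero_mul, sub_zero]
    exact ⟨norm_ne_zero_iff.mpr hA, le_refl _⟩
  · have hBa : 0 < ‖B‖ := norm_pos_iff.mpr hB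
    have hfac : ∀ θ : ℝ, ‖A - B * (Real.cos θ : ℂ)‖ =
        ‖B‖ * ‖A / B - (Real.cos θ : ℂ)‖ := by
      intro θ
      rw [← norm_mul]
      congr 1
      field_simp
    set c : ℂ := A / B with hc
    by_cases him : c.im = 0
    · -- c is real
      set r : ℝ := c.re with hr
      have hcr : c = (r : ℂ) := by
        apply Complex.ext
        · simp [hr]
        · simp [him]
      have hfac2 : ∀ θ : ℝ, ‖A - B * (Real.cos θ : ℂ)‖ =
          ‖B‖ * |r - Real.cos θ| := by
        intro θ
        rw [hfac θ, hcr]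
        congr 1
        rw [show ((r:ℂ) - (Real.cos θ : ℂ)) = ((r - Real.cos θ : ℝ) : ℂ) by push_cast; ring,
          Complex.norm_real, Real.norm_eq_abs]
      by_cases hr1 : |r| ≤ 1
      · -- the hard case
        set a : ℝ := Real.arccos r with ha
        have ha0 : 0 ≤ a := Real.arccos_nonneg r
        have haπ : a ≤ π := Real.arccos_le_pi r
        have hcos : Real.cos a = r := Real.cos_arccos (by linarith [abs_le.mp hr1]) (abs_le.mp hr1).2
        have hnull : volume ({a, 2 * π - a} : Set ℝ) = 0 :=
          ((Set.finite_singleton (2 * π - a)).insert a).measure_zero volume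
        have hC2 : (0:ℝ) ≤ Real.log 2 := Real.log_nonneg one_le_two
        refine key (fun θ => (abs (Real.log (‖B‖)) + Real.log 2) +
            abs (Real.log |Real.sin (θ * (2:ℝ)⁻¹ + a / 2)|) +
            abs (Real.log |Real.sin (θ * (2:ℝ)⁻¹ + (-a) / 2)|)) ?_ ?_
        · exact (((integrableOn_const measure_Icc_lt_top.ne).add (Gint (a/2))).add
            (Gint (-a/2)))
        · have hmem : ∀ᵐ θ ∂(volume.restrict (Set.Icc (0:ℝ) (2 * π))), θ ∈ Set.Icc (0:ℝ) (2*π) :=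
            ae_restrict_mem measurableSet_Icc
          have hnm : ∀ᵐ θ ∂(volume.restrict (Set.Icc (0:ℝ) (2 * π))),
              θ ∉ ({a, 2 * π - a} : Set ℝ) :=
            ae_restrict_of_ae (measure_eq_zero_iff_ae_notMem.mp hnull)
          filter_upwards [hmem, hnm] with θ hθ hθn
          have hne : Real.cos θ ≠ Real.cos a := by
            intro hEq
            rcases le_total θ π with h1 | h1
            · exact hθn (Or.inl (Real.injOn_cos ⟨hθ.1, h1⟩ ⟨ha0, haπ⟩ hEq))
            · have h2 : Real.cos (2 * π - θ) = Real.cos θ := by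
                rw [show 2 * π - θ = -(θ - 2 * π) by ring, Real.cos_neg, Real.cos_sub_two_pi]
              have h3 : 2 * π - θ = a :=
                Real.injOn_cos ⟨by linarith [hθ.2], by linarith⟩ ⟨ha0, haπ⟩ (h2.trans hEq)
              exact hθn (Or.inr (by rw [Set.mem_singleton_iff]; linarith))
          set s₁ : ℝ := Real.sin ((θ + a) / 2) with hs1
          set s₂ : ℝ := Real.sin ((θ - a) / 2) with hs2
          have hprod : Real.cos θ - Real.cos a = -2 * s₁ * s₂ := Real.cos_sub_cos θ a
          have hprodne : Real.cos θ - Real.cos a ≠ 0 := sub_ne_zero.mpr hne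
          have hs1ne : s₁ ≠ 0 := by
            intro hz; rw [hz] at hprod; simp at hprod; exact hprodne (by linarith)
          have hs2ne : s₂ ≠ 0 := by
            intro hz; rw [hz] at hprod; simp at hprod; exact hprodne (by linarith)
          have habs : ‖A - B * (Real.cos θ : ℂ)‖ =
              ‖B‖ * (2 * |s₁| * |s₂|) := by
            rw [hfac2 θ]
            congr 1
            rw [show r - Real.cos θ = -(Real.cos θ - Real.cos a) by rw [hcos]; ring, abs_neg,
              hprod]
            rw [abs_mul, abs_mul]
            norm_num
          constructor
          · rw [habs]
            positivity
          · rw [habs]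
            have hlog : Real.log (‖B‖ * (2 * |s₁| * |s₂|)) =
                Real.log (‖B‖) + Real.log 2 + Real.log |s₁| + Real.log |s₂| := by
              rw [Real.log_mul (ne_of_gt hBa) (by positivity),
                Real.log_mul (by positivity) (abs_ne_zero.mpr hs2ne),
                Real.log_mul (by norm_num) (abs_ne_zero.mpr hs1ne)]
              ring
            rw [hlog]
            have e1 : θ * (2:ℝ)⁻¹ + a / 2 = (θ + a) / 2 := by ring
            have e2 : θ * (2:ℝ)⁻¹ + (-a) / 2 = (θ - a) / 2 := by ring
            rw [e1, e2, ← hs1, ← hs2]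
            have b1 : -(Real.log (‖B‖)) ≤ abs (Real.log (‖B‖)) := neg_le_abs _
            have b2 : -(Real.log |s₁|) ≤ abs (Real.log |s₁|) := neg_le_abs _
            have b3 : -(Real.log |s₂|) ≤ abs (Real.log |s₂|) := neg_le_abs _
            linarith
      · -- |r| > 1 : constant lower bound
        push_neg at hr1
        have hm : 0 < ‖B‖ * (|r| - 1) := by
          apply mul_pos hBa; linarith
        refine key (fun _ => -(Real.log (‖B‖ * (|r| - 1))))
          (integrableOn_const measure_Icc_lt_top.ne) ?_
        refine Filter.Eventually.of_forall fun θ => ?_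
        have hlb : ‖B‖ * (|r| - 1) ≤ ‖A - B * (Real.cos θ : ℂ)‖ := by
          rw [hfac2 θ]
          apply mul_le_mul_of_nonneg_left _ hBa.le
          have h1 : |r| - |Real.cos θ| ≤ |r - Real.cos θ| := abs_sub_abs_le_abs_sub _ _
          have h2 : |Real.cos θ| ≤ 1 := Real.abs_cos_le_one θ
          linarith
        exact ⟨ne_of_gt (lt_of_lt_of_le hm hlb),
          neg_le_neg (Real.log_le_log hm hlb)⟩
    · -- c not real : constant lower bound
      have him' : 0 < |c.im| := abs_pos.mpr him
      have hm : 0 < ‖B‖ * |c.im| := mul_pos hBa him'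
      refine key (fun _ => -(Real.log (‖B‖ * |c.im|)))
        (integrableOn_const measure_Icc_lt_top.ne) ?_
      refine Filter.Eventually.of_forall fun θ => ?_
      have hlb : ‖B‖ * |c.im| ≤ ‖A - B * (Real.cos θ : ℂ)‖ := by
        rw [hfac θ]
        apply mul_le_mul_of_nonneg_left _ hBa.le
        have : (c - (Real.cos θ : ℂ)).im = c.im := by simp
        calc |c.im| = |(c - (Real.cos θ : ℂ)).im| := by rw [this]
          _ ≤ ‖c - (Real.cos θ : ℂ)‖ := Complex.abs_im_le_norm _
      exact ⟨ne_of_gt (lt_of_lt_of_le hm hlb),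
        neg_le_neg (Real.log_le_log hm hlb)⟩

end FKaux

open FKaux in
/-- The integral `(1/4π) ∫₀^{2π} log|1 - z₁² - z₂² - 2z₁z₂ cos θ| dθ` equals `-∞` (i.e. the
negative part of the extended-real-valued integrand, `+∞` where the argument of `log`
vanishes, has infinite integral) exactly at the four points `(±1, 0), (0, ±1)`. -/
theorem FK_determinant_vanishes_iff (z₁ z₂ : ℂ) :
    (∫⁻ θ in Set.Icc (0 : ℝ) (2 * π),
        (if ‖1 - z₁ ^ 2 - z₂ ^ 2 - 2 * z₁ * z₂ * (Real.cos θ : ℂ)‖ = 0 then ⊤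
          else ENNReal.ofReal
            (-(Real.log
              (‖1 - z₁ ^ 2 - z₂ ^ 2 - 2 * z₁ * z₂ * (Real.cos θ : ℂ)‖)))) = ⊤)
      ↔ (z₁, z₂) ∈ ({((1:ℂ), (0:ℂ)), ((-1:ℂ), (0:ℂ)), ((0:ℂ), (1:ℂ)), ((0:ℂ), (-1:ℂ))} :
          Set (ℂ × ℂ)) := by
  constructor
  · intro hint
    by_contra hmem
    have hAB : (1 - z₁ ^ 2 - z₂ ^ 2 : ℂ) ≠ 0 ∨ (2 * z₁ * z₂ : ℂ) ≠ 0 := by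
      by_contra hcon
      push_neg at hcon
      obtain ⟨hA, hB⟩ := hcon
      have hz : z₁ = 0 ∨ z₂ = 0 := by
        rcases mul_eq_zero.mp hB with h | h
        · rcases mul_eq_zero.mp h with h' | h'
          · norm_num at h'
          · exact Or.inl h'
        · exact Or.inr h
      apply hmem
      rcases hz with rfl | rfl
      · have : z₂ ^ 2 = 1 := by
          have : (1 : ℂ) - 0 ^ 2 - z₂ ^ 2 = 0 := hA
          ring_nf at this ⊢
          linear_combination -this
        have h2 : (z₂ - 1) * (z₂ + 1) = 0 := by linear_combination this
        rcases mul_eq_zero.mp h2 with h | h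
        · right; right; left
          simp [sub_eq_zero.mp h]
        · right; right; right
          simp [eq_neg_of_add_eq_zero_left h]
      · have : z₁ ^ 2 = 1 := by
          have : (1 : ℂ) - z₁ ^ 2 - 0 ^ 2 = 0 := hA
          ring_nf at this ⊢
          linear_combination -this
        have h2 : (z₁ - 1) * (z₁ + 1) = 0 := by linear_combination this
        rcases mul_eq_zero.mp h2 with h | h
        · left
          simp [sub_eq_zero.mp h]
        · right; left
          simp [eq_neg_of_add_eq_zero_left h]
    have := lint_ne_top (A := 1 - z₁ ^ 2 - z₂ ^ 2) (B := 2 * z₁ * z₂) hAB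
    exact this hint
  · intro hmem
    have hzero : ∀ θ : ℝ,
        (1 - z₁ ^ 2 - z₂ ^ 2 - 2 * z₁ * z₂ * (Real.cos θ : ℂ)) = 0 := by
      intro θ
      simp only [Set.mem_insert_iff, Set.mem_singleton_iff, Prod.mk.injEq] at hmem
      rcases hmem with ⟨h1, h2⟩ | ⟨h1, h2⟩ | ⟨h1, h2⟩ | ⟨h1, h2⟩ <;> subst h1 <;> subst h2 <;> ring
    have hcalc : (∫⁻ θ in Set.Icc (0 : ℝ) (2 * π),
        (if ‖1 - z₁ ^ 2 - z₂ ^ 2 - 2 * z₁ * z₂ * (Real.cos θ : ℂ)‖ = 0 then ⊤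
          else ENNReal.ofReal
            (-(Real.log
              (‖1 - z₁ ^ 2 - z₂ ^ 2 - 2 * z₁ * z₂ * (Real.cos θ : ℂ)‖))))) =
        ∫⁻ _ in Set.Icc (0 : ℝ) (2 * π), (⊤ : ℝ≥0∞) := by
      apply lintegral_congr
      intro θ
      rw [hzero θ]
      simp
    rw [hcalc, setLIntegral_const, Real.volume_Icc]
    rw [ENNReal.top_mul]
    simp only [ne_eq, ENNReal.ofReal_eq_zero, not_le]
    linarith [pi_pos]
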